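/- arXiv:1809.06831 — 2 statements merged into one kernel-verified Lean document; each statement's English description precedes it below -/
import Mathlib

section
/- In the reduction graph G′, every simple s–t path starting with the edges (s,a),(a,b) either is exactly ⟨(s,a),(a,b),(b,t)⟩ or has the form ⟨(s,a),(a,b),(b,s₁)⟩ · p₁ · ⟨(t₁,c),(c,d),(d,t)⟩ where p₁ is a simple s₁–t₁ path in G. -/
/-- In the reduction graph `G′`, every simple `s–t` path starting with the
edges `(s,a),(a,b)` either is exactly `⟨(s,a),(a,b),(b,t)⟩` or has the form
`⟨(s,a),(a,b),(b,s₁)⟩ · p₁ · ⟨(t₁,c),(c,d),(d,t)⟩` where `p₁` is a simple `s₁–t₁` path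
in `G`. Paths are modelled as node lists: a simple path is a `Chain'` of edges with no
repeated node. -/
theorem reduction_path_structure {V : Type*} (E : V → V → Prop)
    (s t a b c d s₁ t₁ s₂ t₂ : V)
    (hnd : ([s, t, a, b, c, d] : List V).Nodup)
    (hfresh : ∀ u v, E u v →
      u ∉ ([s, t, a, b, c, d] : List V) ∧ v ∉ ([s, t, a, b, c, d] : List V))
    (hs₁ : s₁ ∉ ([s, t, a, b, c, d] : List V)) (ht₁ : t₁ ∉ ([s, t, a, b, c, d] : List V))
    (hs₂ : s₂ ∉ ([s, t, a, b, c, d] : List V)) (ht₂ : t₂ ∉ ([s, t, a, b, c, d] : List V))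
    (E' : V → V → Prop)
    (hE' : ∀ u v, E' u v ↔ E u v ∨ (u, v) ∈
      ([(s, a), (s, c), (a, b), (c, d), (b, s₁), (d, s₂), (t₂, a), (t₁, c), (b, t), (d, t)] :
        List (V × V)))
    (l rest : List V) (hl : l = s :: a :: b :: rest)
    (hchain : l.Chain' E') (hnodup : l.Nodup) (hlast : l.getLast? = some t) :
    l = [s, a, b, t] ∨
      ∃ p₁ : List V, p₁.Chain' E ∧ p₁.Nodup ∧ p₁.head? = some s₁ ∧
        p₁.getLast? = some t₁ ∧ l = [s, a, b] ++ p₁ ++ [c, d, t] := by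
  subst hl
  have hnd' := hnd
  simp only [List.nodup_cons, List.mem_cons, List.not_mem_nil, or_false, not_or,
    List.nodup_nil, and_true] at hnd'
  obtain ⟨⟨hst, hsa, hsb, hsc, hsd⟩, ⟨hta, htb, htc, htd⟩, ⟨hab, hac, had⟩, ⟨hbc, hbd⟩, hcd, -⟩ := hnd'
  have hs₁' := hs₁; have ht₁' := ht₁; have hs₂' := hs₂; have ht₂' := ht₂
  simp only [List.mem_cons, List.not_mem_nil, or_false, not_or] at hs₁' ht₁' hs₂' ht₂'
  obtain ⟨hs₁s, hs₁t, hs₁a, hs₁b, hs₁c, hs₁d⟩ := hs₁'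
  obtain ⟨ht₁s, ht₁t, ht₁a, ht₁b, ht₁c, ht₁d⟩ := ht₁'
  obtain ⟨hs₂s, hs₂t, hs₂a, hs₂b, hs₂c, hs₂d⟩ := hs₂'
  obtain ⟨ht₂s, ht₂t, ht₂a, ht₂b, ht₂c, ht₂d⟩ := ht₂'
  -- successors of a fresh node
  have hsucc : ∀ u v, u ∉ ([s, t, a, b, c, d] : List V) → E' u v →
      (E u v ∧ v ∉ ([s, t, a, b, c, d] : List V)) ∨ v = a ∨ (u = t₁ ∧ v = c) := by
    intro u v hu h
    rw [hE'] at h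
    simp only [List.mem_cons, List.not_mem_nil, or_false, not_or] at hu
    obtain ⟨hus, hut, hua, hub, huc, hud⟩ := hu
    rcases h with h | h
    · exact Or.inl ⟨h, (hfresh _ _ h).2⟩
    · simp only [List.mem_cons, List.not_mem_nil, or_false, Prod.mk.injEq] at h
      rcases h with ⟨h1, h2⟩ | ⟨h1, h2⟩ | ⟨h1, h2⟩ | ⟨h1, h2⟩ | ⟨h1, h2⟩ | ⟨h1, h2⟩ |
        ⟨h1, h2⟩ | ⟨h1, h2⟩ | ⟨h1, h2⟩ | ⟨h1, h2⟩
      · exact absurd h1 hus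
      · exact absurd h1 hus
      · exact absurd h1 hua
      · exact absurd h1 huc
      · exact absurd h1 hub
      · exact absurd h1 hud
      · exact Or.inr (Or.inl h2)
      · exact Or.inr (Or.inr ⟨h1.symm ▸ rfl, h2⟩)
      · exact absurd h1 hub
      · exact absurd h1 hud
  have hsuccb : ∀ v, E' b v → v = s₁ ∨ v = t := by
    intro v h
    rw [hE'] at h
    rcases h with h | h
    · exact absurd (show b ∈ ([s, t, a, b, c, d] : List V) by simp) (hfresh _ _ h).1
    · simp only [List.mem_cons, List.not_mem_nil, or_false, Prod.mk.injEq] at h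
      rcases h with ⟨h1, h2⟩ | ⟨h1, h2⟩ | ⟨h1, h2⟩ | ⟨h1, h2⟩ | ⟨h1, h2⟩ | ⟨h1, h2⟩ |
        ⟨h1, h2⟩ | ⟨h1, h2⟩ | ⟨h1, h2⟩ | ⟨h1, h2⟩
      · exact absurd h1.symm hsb
      · exact absurd h1.symm hsb
      · exact absurd h1.symm hab
      · exact absurd h1 hbc
      · exact Or.inl h2
      · exact absurd h1 hbd
      · exact absurd h1.symm ht₂b
      · exact absurd h1.symm ht₁b
      · exact Or.inr h2
      · exact absurd h1 hbd
  have hsuccc : ∀ v, E' c v → v = d := by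
    intro v h
    rw [hE'] at h
    rcases h with h | h
    · exact absurd (show c ∈ ([s, t, a, b, c, d] : List V) by simp) (hfresh _ _ h).1
    · simp only [List.mem_cons, List.not_mem_nil, or_false, Prod.mk.injEq] at h
      rcases h with ⟨h1, h2⟩ | ⟨h1, h2⟩ | ⟨h1, h2⟩ | ⟨h1, h2⟩ | ⟨h1, h2⟩ | ⟨h1, h2⟩ |
        ⟨h1, h2⟩ | ⟨h1, h2⟩ | ⟨h1, h2⟩ | ⟨h1, h2⟩
      · exact absurd h1.symm hsc
      · exact absurd h1.symm hsc
      · exact absurd h1.symm hac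
      · exact h2
      · exact absurd h1.symm hbc
      · exact absurd h1 hcd
      · exact absurd h1.symm ht₂c
      · exact absurd h1.symm ht₁c
      · exact absurd h1.symm hbc
      · exact absurd h1 hcd
  have hsuccd : ∀ v, E' d v → v = s₂ ∨ v = t := by
    intro v h
    rw [hE'] at h
    rcases h with h | h
    · exact absurd (show d ∈ ([s, t, a, b, c, d] : List V) by simp) (hfresh _ _ h).1
    · simp only [List.mem_cons, List.not_mem_nil, or_false, Prod.mk.injEq] at h
      rcases h with ⟨h1, h2⟩ | ⟨h1, h2⟩ | ⟨h1, h2⟩ | ⟨h1, h2⟩ | ⟨h1, h2⟩ | ⟨h1, h2⟩ |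
        ⟨h1, h2⟩ | ⟨h1, h2⟩ | ⟨h1, h2⟩ | ⟨h1, h2⟩
      · exact absurd h1.symm hsd
      · exact absurd h1.symm hsd
      · exact absurd h1.symm had
      · exact absurd h1.symm hcd
      · exact absurd h1.symm hbd
      · exact Or.inl h2
      · exact absurd h1.symm ht₂d
      · exact absurd h1.symm ht₁d
      · exact absurd h1.symm hbd
      · exact Or.inr h2
  have hsucct : ∀ v, E' t v → False := by
    intro v h
    rw [hE'] at h
    rcases h with h | h
    · exact absurd (show t ∈ ([s, t, a, b, c, d] : List V) by simp) (hfresh _ _ h).1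
    · simp only [List.mem_cons, List.not_mem_nil, or_false, Prod.mk.injEq] at h
      rcases h with ⟨h1, h2⟩ | ⟨h1, h2⟩ | ⟨h1, h2⟩ | ⟨h1, h2⟩ | ⟨h1, h2⟩ | ⟨h1, h2⟩ |
        ⟨h1, h2⟩ | ⟨h1, h2⟩ | ⟨h1, h2⟩ | ⟨h1, h2⟩
      · exact hst h1.symm
      · exact hst h1.symm
      · exact hta h1
      · exact htc h1
      · exact htb h1
      · exact htd h1
      · exact ht₂t h1.symm
      · exact ht₁t h1.symm
      · exact htb h1
      · exact htd h1
  -- Lemma B: a chain from a fresh node avoiding a and c stays fresh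
  have lemB : ∀ (m : List V) (u : V), u ∉ ([s, t, a, b, c, d] : List V) →
      (u :: m).Chain' E' → a ∉ (u :: m) → c ∉ (u :: m) →
      ∀ x ∈ u :: m, x ∉ ([s, t, a, b, c, d] : List V) := by
    intro m
    induction m with
    | nil =>
      intro u hu _ _ _ x hx
      simp only [List.mem_cons, List.not_mem_nil, or_false] at hx
      exact hx ▸ hu
    | cons v m' ih =>
      intro u hu hch ha hc x hx
      rw [List.Chain', List.isChain_cons_cons] at hch
      have hv : v ∉ ([s, t, a, b, c, d] : List V) := by
        rcases hsucc u v hu hch.1 with ⟨_, hv⟩ | hva | ⟨_, hvc⟩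
        · exact hv
        · exact absurd (by simp [hva]) ha
        · exact absurd (by simp [hvc]) hc
      rcases List.mem_cons.mp hx with rfl | hx
      · exact hu
      · exact ih v hv hch.2 (fun h => ha (List.mem_cons_of_mem _ h))
          (fun h => hc (List.mem_cons_of_mem _ h)) x hx
  -- main auxiliary lemma
  have aux : ∀ (m : List V) (u : V), u ∉ ([s, t, a, b, c, d] : List V) →
      (u :: m).Chain' E' → (u :: m).Nodup → a ∉ (u :: m) →
      (u :: m).getLast? = some t →
      ∃ p₁ : List V, p₁.Chain' E ∧ p₁.Nodup ∧ p₁.head? = some u ∧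
        p₁.getLast? = some t₁ ∧ u :: m = p₁ ++ [c, d, t] := by
    intro m
    induction m with
    | nil =>
      intro u hu _ _ _ hlast
      simp only [List.getLast?_singleton, Option.some.injEq] at hlast
      exact absurd (by simp [hlast]) hu
    | cons v m' ih =>
      intro u hu hch hnd ha hlast
      rw [List.Chain', List.isChain_cons_cons] at hch
      rcases hsucc u v hu hch.1 with ⟨hE, hv⟩ | hva | ⟨hut, hvc⟩
      · -- follow an E edge
        obtain ⟨p₁, hp1, hp2, hp3, hp4, hp5⟩ := ih v hv hch.2 hnd.of_cons
          (fun h => ha (List.mem_cons_of_mem _ h))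
          (by rwa [List.getLast?_cons_cons] at hlast)
        refine ⟨u :: p₁, ?_, ?_, rfl, ?_, ?_⟩
        · rw [List.Chain', List.isChain_cons]
          exact ⟨fun y hy => by rw [hp3] at hy; exact (Option.mem_some_iff.mp hy) ▸ hE, hp1⟩
        · refine List.nodup_cons.mpr ⟨fun h => ?_, hp2⟩
          have : u ∈ v :: m' := by
            rw [hp5]; exact List.mem_append_left _ h
          exact (List.nodup_cons.mp hnd).1 this
        · obtain ⟨q, qs, rfl⟩ : ∃ q qs, p₁ = q :: qs := by
            cases p₁ with
            | nil => simp at hp3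
            | cons q qs => exact ⟨q, qs, rfl⟩
          rwa [List.getLast?_cons_cons]
        · rw [List.cons_append, hp5]
      · exact absurd (by simp [hva]) ha
      · -- u = t₁, v = c : tail must be c :: d :: t
        obtain rfl : c = v := hvc.symm
        obtain rfl : t₁ = u := hut.symm
        cases m' with
        | nil =>
          simp only [List.getLast?_cons_cons, List.getLast?_singleton,
            Option.some.injEq] at hlast
          exact absurd hlast.symm htc
        | cons w m'' =>
          have hwd : w = d := hsuccc w ((List.isChain_cons_cons.mp hch.2).1)
          subst hwd
          cases m'' with
          | nil =>
            simp only [List.getLast?_cons_cons, List.getLast?_singleton,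
              Option.some.injEq] at hlast
            exact absurd hlast.symm htd
          | cons x m''' =>
            have hch2 := (List.isChain_cons_cons.mp hch.2).2
            have hch3 := (List.isChain_cons_cons.mp hch2).2
            rcases hsuccd x ((List.isChain_cons_cons.mp hch2).1) with hxs | hxt
            · -- x = s₂ : impossible, would get stuck among fresh nodes
              obtain rfl : s₂ = x := hxs.symm
              exfalso
              have hach : a ∉ s₂ :: m''' := by
                intro h; exact ha (by simp [List.mem_cons]; tauto)
              have hcch : c ∉ s₂ :: m''' := by
                have := hnd.of_cons
                rw [List.nodup_cons] at this
                intro h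
                rcases List.mem_cons.mp h with h | h
                · exact hs₂c h.symm
                · exact this.1 (by simp [List.mem_cons]; tauto)
              have hall := lemB m''' s₂ hs₂ hch3 hach hcch
              have hne : (s₂ :: m''') ≠ [] := List.cons_ne_nil _ _
              have hlast' : (s₂ :: m''').getLast? = some t := by
                simpa only [List.getLast?_cons_cons] using hlast
              have hmem : t ∈ s₂ :: m''' := by
                have h1 := List.getLast?_eq_getLast hne
                rw [h1] at hlast'
                exact Option.some.inj hlast' ▸ List.getLast_mem hne
              exact hall t hmem (by simp)
            · -- x = t : path ends here
              obtain rfl : t = x := hxt.symm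
              cases m''' with
              | nil =>
                exact ⟨[t₁], List.isChain_singleton _, List.nodup_singleton _, rfl, rfl, rfl⟩
              | cons z m'''' =>
                exact absurd ((List.isChain_cons_cons.mp hch3).1) (fun h => hsucct z h)
  -- now the main casework
  rw [List.Chain', List.isChain_cons_cons, List.isChain_cons_cons] at hchain
  obtain ⟨hEsa, hEab, hchb⟩ := hchain
  cases rest with
  | nil =>
    simp only [List.getLast?_cons_cons, List.getLast?_singleton, Option.some.injEq] at hlast
    exact absurd hlast.symm htb
  | cons x rest₂ =>
    rw [List.isChain_cons_cons] at hchb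
    rcases hsuccb x hchb.1 with hxs | hxt
    · -- x = s₁
      obtain rfl : s₁ = x := hxs.symm
      right
      have hnodup' : (s₁ :: rest₂).Nodup := hnodup.of_cons.of_cons.of_cons
      have hach : a ∉ s₁ :: rest₂ := by
        have := hnodup.of_cons
        rw [List.nodup_cons] at this
        exact fun h => this.1 (List.mem_cons_of_mem _ h)
      have hlast' : (s₁ :: rest₂).getLast? = some t := by
        simpa only [List.getLast?_cons_cons] using hlast
      obtain ⟨p₁, hp1, hp2, hp3, hp4, hp5⟩ := aux rest₂ s₁ hs₁ hchb.2 hnodup' hach hlast'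
      exact ⟨p₁, hp1, hp2, hp3, hp4, by simp [hp5]⟩
    · -- x = t : rest₂ must be empty
      obtain rfl : t = x := hxt.symm
      cases rest₂ with
      | nil => exact Or.inl rfl
      | cons z rest₃ =>
        exact absurd ((List.isChain_cons_cons.mp hchb.2).1) (fun h => hsucct z h)
end

section
/- A simple s–t path in the reduction graph G′ that enters G through edge (b,s₁) must exit G through edge (t₁,c): exiting through (t₂,a) would revisit node a and thus create a cycle. -/
/-- The list of edges (consecutive node pairs) of a path given as a node list. -/
def pathEdges {V : Type*} (l : List V) : List (V × V) := l.zip l.tail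

/-- If a list has an entry not satisfying `p` at index `i` and one satisfying `p` at a later
index `j`, then some adjacent pair between them crosses from `¬ p` to `p`. -/
lemma exists_cross {V : Type*} (p : V → Prop) (l : List V) :
    ∀ j i, i < j → ∀ x y : V, l[i]? = some x → ¬ p x → l[j]? = some y → p y →
      ∃ (k : ℕ) (u v : V), i ≤ k ∧ k + 1 ≤ j ∧ l[k]? = some u ∧ l[k+1]? = some v ∧
        ¬ p u ∧ p v := by
  classical
  intro j
  induction j with
  | zero => omega
  | succ n ih =>
    intro i hij x y hx hpx hy hpy
    by_cases hin : i = n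
    · exact ⟨n, x, y, by omega, by omega, hin ▸ hx, hy, hpx, hpy⟩
    · have hn1 : n + 1 < l.length := (List.getElem?_eq_some_iff.1 hy).1
      have hz : l[n]? = some (l[n]'(by omega)) := List.getElem?_eq_some_iff.2 ⟨by omega, rfl⟩
      by_cases hpz : p (l[n]'(by omega))
      · obtain ⟨k, u, v, h1, h2, h3, h4, h5, h6⟩ :=
          ih i (by omega) x _ hx hpx hz hpz
        exact ⟨k, u, v, h1, by omega, h3, h4, h5, h6⟩
      · exact ⟨n, _, y, by omega, le_refl _, hz, hy, hpz, hpy⟩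

/-- A simple `s–t` path in the reduction graph `G′` that enters `G` through
edge `(b,s₁)` must exit `G` through edge `(t₁,c)`: exiting through `(t₂,a)` would revisit
node `a` and thus create a cycle. -/
theorem reduction_must_exit_through_t₁c {V : Type*} (E : V → V → Prop)
    (s t a b c d s₁ t₁ s₂ t₂ : V)
    (hnd : ([s, t, a, b, c, d] : List V).Nodup)
    (hfresh : ∀ u v, E u v →
      u ∉ ([s, t, a, b, c, d] : List V) ∧ v ∉ ([s, t, a, b, c, d] : List V))
    (hs₁ : s₁ ∉ ([s, t, a, b, c, d] : List V)) (ht₁ : t₁ ∉ ([s, t, a, b, c, d] : List V))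
    (hs₂ : s₂ ∉ ([s, t, a, b, c, d] : List V)) (ht₂ : t₂ ∉ ([s, t, a, b, c, d] : List V))
    (E' : V → V → Prop)
    (hE' : ∀ u v, E' u v ↔ E u v ∨ (u, v) ∈
      ([(s, a), (s, c), (a, b), (c, d), (b, s₁), (d, s₂), (t₂, a), (t₁, c), (b, t), (d, t)] :
        List (V × V)))
    (l : List V) (hchain : l.Chain' E') (hnodup : l.Nodup)
    (hhead : l.head? = some s) (hlast : l.getLast? = some t)
    (henter : (b, s₁) ∈ pathEdges l) :
    (t₁, c) ∈ pathEdges l ∧ (t₂, a) ∉ pathEdges l := by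
  classical
  -- basic index toolkit
  have hmemE : ∀ u v : V, (u, v) ∈ pathEdges l ↔ ∃ i, l[i]? = some u ∧ l[i+1]? = some v := by
    intro u v
    simp only [pathEdges, List.mem_iff_getElem?, List.getElem?_zip_eq_some, List.getElem?_tail]
  have hedge : ∀ (i : ℕ) (u v : V), l[i]? = some u → l[i+1]? = some v → E' u v := by
    intro i u v hu hv
    obtain ⟨hi, hu⟩ := List.getElem?_eq_some_iff.1 hu
    obtain ⟨hi1, hv⟩ := List.getElem?_eq_some_iff.1 hv
    have h := List.isChain_iff_getElem.1 hchain i (by omega)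
    rwa [hu, hv] at h
  have hsome : ∀ (i j : ℕ), i ≤ j → (∃ x : V, l[j]? = some x) → ∃ x : V, l[i]? = some x := by
    rintro i j hij ⟨x, hx⟩
    obtain ⟨hj, -⟩ := List.getElem?_eq_some_iff.1 hx
    exact ⟨l[i]'(by omega), List.getElem?_eq_some_iff.2 ⟨by omega, rfl⟩⟩
  have inj : ∀ (i j : ℕ) (x : V), l[i]? = some x → l[j]? = some x → i = j := by
    intro i j x hi hj
    exact (List.getElem?_inj (List.getElem?_eq_some_iff.1 hi).1 hnodup).1 (hi.trans hj.symm)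
  have h0 : l[0]? = some s := by rw [← List.head?_eq_getElem?]; exact hhead
  have hT : l[l.length - 1]? = some t := by rw [← List.getLast?_eq_getElem?]; exact hlast
  -- distinctness
  have hndS := hnd
  simp only [List.nodup_cons, List.mem_cons, List.not_mem_nil, or_false, not_or,
    List.nodup_nil, and_true, List.mem_singleton] at hndS
  obtain ⟨⟨hst, hsa, hsb, hsc, hsd⟩, ⟨hta, htb, htc, htd⟩, ⟨hab, hac, had⟩, ⟨hbc, hbd⟩, hcd, -⟩ :=
    hndS
  have hs₁' := hs₁; have ht₁' := ht₁; have hs₂' := hs₂; have ht₂' := ht₂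
  simp only [List.mem_cons, List.not_mem_nil, or_false, not_or, List.mem_singleton]
    at hs₁' ht₁' hs₂' ht₂'
  obtain ⟨h1s, h1t, h1a, h1b, h1c, h1d⟩ := hs₁'
  obtain ⟨g1s, g1t, g1a, g1b, g1c, g1d⟩ := ht₁'
  obtain ⟨h2s, h2t, h2a, h2b, h2c, h2d⟩ := hs₂'
  obtain ⟨g2s, g2t, g2a, g2b, g2c, g2d⟩ := ht₂'
  -- special-edge analyses
  have especial₂ : ∀ u v : V, E' u v → v ∈ ([s, t, a, b, c, d] : List V) →
      (u, v) ∈ ([(s, a), (s, c), (a, b), (c, d), (b, s₁), (d, s₂), (t₂, a), (t₁, c), (b, t),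
        (d, t)] : List (V × V)) := by
    intro u v h hv
    rcases (hE' u v).1 h with hE | hm
    · exact absurd hv (hfresh u v hE).2
    · exact hm
  have especial₁ : ∀ u v : V, E' u v → u ∈ ([s, t, a, b, c, d] : List V) →
      (u, v) ∈ ([(s, a), (s, c), (a, b), (c, d), (b, s₁), (d, s₂), (t₂, a), (t₁, c), (b, t),
        (d, t)] : List (V × V)) := by
    intro u v h hu
    rcases (hE' u v).1 h with hE | hm
    · exact absurd hu (hfresh u v hE).1
    · exact hm
  have predB : ∀ u : V, E' u b → u = a := by
    intro u h
    have hm := especial₂ u b h (by simp)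
    simp only [List.mem_cons, List.not_mem_nil, or_false, Prod.mk.injEq] at hm
    rcases hm with ⟨h1, h2⟩ | ⟨h1, h2⟩ | ⟨h1, h2⟩ | ⟨h1, h2⟩ | ⟨h1, h2⟩ | ⟨h1, h2⟩ | ⟨h1, h2⟩ |
      ⟨h1, h2⟩ | ⟨h1, h2⟩ | ⟨h1, h2⟩
    · exact absurd h2.symm hab
    · exact absurd h2 hbc
    · exact h1
    · exact absurd h2 hbd
    · exact absurd h2.symm h1b
    · exact absurd h2.symm h2b
    · exact absurd h2.symm hab
    · exact absurd h2 hbc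
    · exact absurd h2.symm htb
    · exact absurd h2.symm htb
  have predD : ∀ u : V, E' u d → u = c := by
    intro u h
    have hm := especial₂ u d h (by simp)
    simp only [List.mem_cons, List.not_mem_nil, or_false, Prod.mk.injEq] at hm
    rcases hm with ⟨h1, h2⟩ | ⟨h1, h2⟩ | ⟨h1, h2⟩ | ⟨h1, h2⟩ | ⟨h1, h2⟩ | ⟨h1, h2⟩ | ⟨h1, h2⟩ |
      ⟨h1, h2⟩ | ⟨h1, h2⟩ | ⟨h1, h2⟩
    · exact absurd h2.symm had
    · exact absurd h2.symm hcd
    · exact absurd h2.symm hbd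
    · exact h1
    · exact absurd h2.symm h1d
    · exact absurd h2.symm h2d
    · exact absurd h2.symm had
    · exact absurd h2.symm hcd
    · exact absurd h2.symm htd
    · exact absurd h2.symm htd
  have crossInto : ∀ u v : V, E' u v → u ∉ ([s, t, a, b, c, d] : List V) →
      v ∈ ([s, t, a, b, c, d] : List V) → (u = t₂ ∧ v = a) ∨ (u = t₁ ∧ v = c) := by
    intro u v h hu hv
    have hm := especial₂ u v h hv
    simp only [List.mem_cons, List.not_mem_nil, or_false, Prod.mk.injEq] at hm
    rcases hm with ⟨h1, h2⟩ | ⟨h1, h2⟩ | ⟨h1, h2⟩ | ⟨h1, h2⟩ | ⟨h1, h2⟩ | ⟨h1, h2⟩ | ⟨h1, h2⟩ |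
      ⟨h1, h2⟩ | ⟨h1, h2⟩ | ⟨h1, h2⟩
    · exact absurd (by simp [h1]) hu
    · exact absurd (by simp [h1]) hu
    · exact absurd (by simp [h1]) hu
    · exact absurd (by simp [h1]) hu
    · exact absurd (by simp [h1]) hu
    · exact absurd (by simp [h1]) hu
    · exact Or.inl ⟨h1, h2⟩
    · exact Or.inr ⟨h1, h2⟩
    · exact absurd (by simp [h1]) hu
    · exact absurd (by simp [h1]) hu
  have crossOut : ∀ u v : V, E' u v → u ∈ ([s, t, a, b, c, d] : List V) →
      v ∉ ([s, t, a, b, c, d] : List V) → (u = b ∧ v = s₁) ∨ (u = d ∧ v = s₂) := by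
    intro u v h hu hv
    have hm := especial₁ u v h hu
    simp only [List.mem_cons, List.not_mem_nil, or_false, Prod.mk.injEq] at hm
    rcases hm with ⟨h1, h2⟩ | ⟨h1, h2⟩ | ⟨h1, h2⟩ | ⟨h1, h2⟩ | ⟨h1, h2⟩ | ⟨h1, h2⟩ | ⟨h1, h2⟩ |
      ⟨h1, h2⟩ | ⟨h1, h2⟩ | ⟨h1, h2⟩
    · exact absurd (by simp [h2]) hv
    · exact absurd (by simp [h2]) hv
    · exact absurd (by simp [h2]) hv
    · exact absurd (by simp [h2]) hv
    · exact Or.inl ⟨h1, h2⟩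
    · exact Or.inr ⟨h1, h2⟩
    · exact absurd (by simp [h2]) hv
    · exact absurd (by simp [h2]) hv
    · exact absurd (by simp [h2]) hv
    · exact absurd (by simp [h2]) hv
  -- locate b, s₁
  obtain ⟨m, hmb, hms₁⟩ := (hmemE b s₁).1 henter
  have hm1 : 1 ≤ m := by
    rcases Nat.eq_zero_or_pos m with h | h
    · subst h
      exact absurd (Option.some.inj (h0.symm.trans hmb)) hsb
    · exact h
  -- a immediately before b
  obtain ⟨x, hx⟩ := hsome (m - 1) m (by omega) ⟨b, hmb⟩
  have hxa : x = a := by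
    apply predB
    have hmm : m - 1 + 1 = m := by omega
    exact hedge (m - 1) x b hx (by rwa [hmm])
  rw [hxa] at hx
  -- position of t
  have hmlen : m + 1 < l.length := (List.getElem?_eq_some_iff.1 hms₁).1
  have hq : m + 1 < l.length - 1 := by
    rcases Nat.lt_or_ge (m + 1) (l.length - 1) with h | h
    · exact h
    · have heq : m + 1 = l.length - 1 := by omega
      rw [heq] at hms₁
      exact absurd (Option.some.inj (hms₁.symm.trans hT)) h1t
  -- first return to {s,t,a,b,c,d} after s₁
  obtain ⟨k₀, u, v, hk₀1, hk₀2, hu, hv, hpu, hpv⟩ :=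
    exists_cross (fun x => x ∈ ([s, t, a, b, c, d] : List V)) l (l.length - 1) (m + 1) hq
      s₁ t hms₁ hs₁ hT (by simp)
  have hcr := crossInto u v (hedge k₀ u v hu hv) hpu hpv
  have hkt₁c : l[k₀]? = some t₁ ∧ l[k₀ + 1]? = some c := by
    rcases hcr with ⟨hu2, hv2⟩ | ⟨hu2, hv2⟩
    · rw [hv2] at hv
      have := inj (k₀ + 1) (m - 1) a hv hx
      omega
    · rw [hu2] at hu; rw [hv2] at hv; exact ⟨hu, hv⟩
  obtain ⟨hkt₁, hkc⟩ := hkt₁c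
  refine ⟨(hmemE t₁ c).2 ⟨k₀, hkt₁, hkc⟩, ?_⟩
  -- no (t₂, a) edge
  intro hmem
  obtain ⟨i, hit₂, hia⟩ := (hmemE t₂ a).1 hmem
  have hi1 : i + 1 = m - 1 := inj (i + 1) (m - 1) a hia hx
  have hi0 : 1 ≤ i := by
    rcases Nat.eq_zero_or_pos i with h | h
    · subst h
      exact absurd (Option.some.inj (h0.symm.trans hit₂)).symm g2s
    · exact h
  -- walk back from t₂: cross from the special set to its complement
  obtain ⟨k, w, z, hk1, hk2, hw, hz, hpw, hpz⟩ :=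
    exists_cross (fun x => x ∉ ([s, t, a, b, c, d] : List V)) l i 0 (by omega)
      s t₂ h0 (by simp) hit₂ ht₂
  have hcr2 := crossOut w z (hedge k w z hw hz) (not_not.1 hpw) hpz
  rcases hcr2 with ⟨hw2, hz2⟩ | ⟨hw2, hz2⟩
  · -- (b, s₁) : b revisited
    rw [hw2] at hw
    have := inj k m b hw hmb
    omega
  · -- (d, s₂) : then c precedes d, but c occurs only after s₁
    rw [hw2] at hw
    have hk3 : 1 ≤ k := by
      rcases Nat.eq_zero_or_pos k with h | h
      · rw [h] at hw
        exact absurd (Option.some.inj (h0.symm.trans hw)) hsd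
      · exact h
    obtain ⟨w', hw'⟩ := hsome (k - 1) k (by omega) ⟨d, hw⟩
    have hw'c : w' = c := by
      apply predD
      have hkk : k - 1 + 1 = k := by omega
      exact hedge (k - 1) w' d hw' (by rwa [hkk])
    rw [hw'c] at hw'
    have := inj (k - 1) (k₀ + 1) c hw' hkc
    omega
end
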